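/- No finite dimensional Banach space of dimension at least 2 has the Bishop–Phelps–Bollobás operator property for numerical radius (BPBop-nu). -/

import Mathlib

noncomputable section

open Filter Topology

variable (𝕜 : Type*) [RCLike 𝕜] (X : Type*) [NormedAddCommGroup X] [NormedSpace 𝕜 X]

/-- `(x, f)` is a state of `X`: `x ∈ S_X`, `f ∈ S_{X*}`, `f x = 1`. -/
def IsState (x : X) (f : X →L[𝕜] 𝕜) : Prop :=
  ‖x‖ = 1 ∧ ‖f‖ = 1 ∧ f x = 1

/-- The numerical radius `v(T) = sup {|f (T x)| : (x, f) ∈ Π(X)}`. -/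
def nrad (T : X →L[𝕜] X) : ℝ :=
  sSup {r : ℝ | ∃ x f, IsState 𝕜 X x f ∧ r = ‖f (T x)‖}

/-- The numerical index `n(X) = inf {v(T) : ‖T‖ = 1}`. -/
def nindex : ℝ :=
  sInf {r : ℝ | ∃ T : X →L[𝕜] X, ‖T‖ = 1 ∧ r = nrad 𝕜 X T}

/-- The Bishop–Phelps–Bollobás operator property for numerical radius. -/
def BPBopNu : Prop :=
  ∀ ε : ℝ, 0 < ε → ∃ η : ℝ, 0 < η ∧
    ∀ (T : X →L[𝕜] X) (x : X) (f : X →L[𝕜] 𝕜),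
      nrad 𝕜 X T = 1 → IsState 𝕜 X x f → 1 - η < ‖f (T x)‖ →
      ∃ (y : X) (g : X →L[𝕜] 𝕜), IsState 𝕜 X y g ∧ ‖g (T y)‖ = 1 ∧
        ‖y - x‖ < ε ∧ ‖g - f‖ < ε

/-- no finite dimensional Banach space of dimension at least 2 has the
BPBop-nu. -/
theorem stmt10 [CompleteSpace X] [FiniteDimensional 𝕜 X]
    (h : 2 ≤ Module.finrank 𝕜 X) : ¬ BPBopNu 𝕜 X := by
  intro H
  obtain ⟨η, hη, hmain⟩ := H (1/2) (by norm_num)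
  -- a norm-one vector x₀ with support functional f₀
  have hnt : Nontrivial X := Module.nontrivial_of_finrank_pos (R := 𝕜) (by omega)
  obtain ⟨v, hv⟩ := exists_ne (0 : X)
  set x₀ : X := ((‖v‖⁻¹ : ℝ) : 𝕜) • v with hx₀def
  have hx₀ : ‖x₀‖ = 1 := by
    rw [hx₀def, norm_smul, RCLike.norm_ofReal, abs_of_nonneg (by positivity)]
    field_simp [norm_ne_zero_iff.mpr hv]
  have hx₀ne : x₀ ≠ 0 := by
    intro h0
    rw [h0, norm_zero] at hx₀; norm_num at hx₀
  obtain ⟨f₀, hf₀norm, hf₀x₀'⟩ := exists_dual_vector 𝕜 x₀ (norm_ne_zero_iff.mpr hx₀ne)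
  have hf₀x₀ : f₀ x₀ = 1 := by rw [hf₀x₀', hx₀]; norm_num
  -- a norm-one vector z in the kernel of f₀
  have hker : ∃ z : X, z ≠ 0 ∧ f₀ z = 0 := by
    by_contra hc
    push_neg at hc
    have hinj : Function.Injective (f₀ : X →ₗ[𝕜] 𝕜) := by
      intro a b hab
      by_contra hne
      exact hc (a - b) (sub_ne_zero.mpr hne) (by simpa [sub_eq_zero] using
        (by rw [map_sub, show f₀ a = f₀ b from hab, sub_self] : f₀ (a - b) = 0))
    have := LinearMap.finrank_le_finrank_of_injective hinj
    rw [Module.finrank_self] at this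
    omega
  obtain ⟨z', hz'ne, hz'ker⟩ := hker
  set z : X := ((‖z'‖⁻¹ : ℝ) : 𝕜) • z' with hzdef
  have hz : ‖z‖ = 1 := by
    rw [hzdef, norm_smul, RCLike.norm_ofReal, abs_of_nonneg (by positivity)]
    field_simp [norm_ne_zero_iff.mpr hz'ne]
  have hzker : f₀ z = 0 := by
    rw [hzdef, map_smul, hz'ker, smul_zero]
  have hzne : z ≠ 0 := by
    intro h0; rw [h0, norm_zero] at hz; norm_num at hz
  obtain ⟨g, hgnorm, hgz'⟩ := exists_dual_vector 𝕜 z (norm_ne_zero_iff.mpr hzne)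
  have hgz : g z = 1 := by rw [hgz', hz]; norm_num
  -- the parameter t and the operator T
  set t : ℝ := min η 1 / 2 with htdef
  have ht0 : 0 < t := by positivity
  have ht1 : t < 1 := by
    have : min η 1 ≤ 1 := min_le_right _ _
    rw [htdef]; linarith
  have htη : t < η := by
    have h1 : min η 1 ≤ η := min_le_left _ _
    rw [htdef]; linarith
  set T : X →L[𝕜] X :=
    ((1 - t : ℝ) : 𝕜) • ContinuousLinearMap.id 𝕜 X + ((t : ℝ) : 𝕜) • (f₀.smulRight x₀)
    with hTdef
  have hT : ∀ (x : X) (f : X →L[𝕜] 𝕜),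
      f (T x) = ((1 - t : ℝ) : 𝕜) * f x + ((t : ℝ) : 𝕜) * (f₀ x * f x₀) := by
    intro x f
    simp [hTdef, ContinuousLinearMap.smulRight_apply, mul_comm, mul_assoc, mul_left_comm]
  -- bound : every state gives value at most 1
  have hbound : ∀ (x : X) (f : X →L[𝕜] 𝕜), IsState 𝕜 X x f → ‖f (T x)‖ ≤ 1 := by
    rintro x f ⟨hx1, hf1, hfx⟩
    rw [hT]
    have h1 : ‖((1 - t : ℝ) : 𝕜) * f x‖ = 1 - t := by
      rw [norm_mul, hfx, norm_one, RCLike.norm_ofReal, abs_of_nonneg (by linarith)]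
      ring
    have h2 : ‖((t : ℝ) : 𝕜) * (f₀ x * f x₀)‖ ≤ t := by
      rw [norm_mul, norm_mul, RCLike.norm_ofReal, abs_of_nonneg ht0.le]
      have hfx0 : ‖f₀ x‖ ≤ 1 := by
        calc ‖f₀ x‖ ≤ ‖f₀‖ * ‖x‖ := f₀.le_opNorm x
        _ = 1 := by rw [hf₀norm, hx1]; ring
      have hfx1 : ‖f x₀‖ ≤ 1 := by
        calc ‖f x₀‖ ≤ ‖f‖ * ‖x₀‖ := f.le_opNorm x₀
        _ = 1 := by rw [hf1, hx₀]; ring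
      calc t * (‖f₀ x‖ * ‖f x₀‖) ≤ t * (1 * 1) := by
            apply mul_le_mul_of_nonneg_left _ ht0.le
            exact mul_le_mul hfx0 hfx1 (norm_nonneg _) zero_le_one
        _ = t := by ring
    calc ‖((1 - t : ℝ) : 𝕜) * f x + ((t : ℝ) : 𝕜) * (f₀ x * f x₀)‖
        ≤ ‖((1 - t : ℝ) : 𝕜) * f x‖ + ‖((t : ℝ) : 𝕜) * (f₀ x * f x₀)‖ := norm_add_le _ _
      _ ≤ (1 - t) + t := by rw [h1]; linarith
      _ = 1 := by ring
  -- nrad T = 1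
  have hstate₀ : IsState 𝕜 X x₀ f₀ := ⟨hx₀, hf₀norm, hf₀x₀⟩
  have hval₀ : ‖f₀ (T x₀)‖ = 1 := by
    rw [hT, hf₀x₀]
    have : ((1 - t : ℝ) : 𝕜) * 1 + ((t : ℝ) : 𝕜) * (1 * 1) = ((1 : ℝ) : 𝕜) := by
      push_cast; ring
    rw [this, RCLike.norm_ofReal]
    norm_num
  have hnrad : nrad 𝕜 X T = 1 := by
    unfold nrad
    apply le_antisymm
    · apply Real.sSup_le
      · rintro r ⟨x, f, hs, rfl⟩
        exact hbound x f hs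
      · norm_num
    · apply le_csSup
      · exact ⟨1, by rintro r ⟨x, f, hs, rfl⟩; exact hbound x f hs⟩
      · exact ⟨x₀, f₀, hstate₀, hval₀.symm⟩
  -- the state (z, g) nearly attains
  have hstatez : IsState 𝕜 X z g := ⟨hz, hgnorm, hgz⟩
  have hvalz : ‖g (T z)‖ = 1 - t := by
    rw [hT, hzker, hgz]
    have : ((1 - t : ℝ) : 𝕜) * 1 + ((t : ℝ) : 𝕜) * (0 * g x₀) = ((1 - t : ℝ) : 𝕜) := by
      ring
    rw [this, RCLike.norm_ofReal, abs_of_nonneg (by linarith : (0:ℝ) ≤ 1 - t)]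
  obtain ⟨y, g', ⟨hy1, hg'1, hg'y⟩, hatt, hyz, -⟩ :=
    hmain T z g hnrad hstatez (by rw [hvalz]; linarith)
  -- attainment forces ‖f₀ y‖ ≥ 1
  rw [hT, hg'y, mul_one] at hatt
  have hg'x₀ : ‖g' x₀‖ ≤ 1 := by
    calc ‖g' x₀‖ ≤ ‖g'‖ * ‖x₀‖ := g'.le_opNorm x₀
    _ = 1 := by rw [hg'1, hx₀]; ring
  have hf₀y : ‖f₀ y‖ ≤ 1 := by
    calc ‖f₀ y‖ ≤ ‖f₀‖ * ‖y‖ := f₀.le_opNorm y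
    _ = 1 := by rw [hf₀norm, hy1]; ring
  have hkey : (1 : ℝ) ≤ (1 - t) + t * ‖f₀ y‖ := by
    calc (1 : ℝ) = ‖((1 - t : ℝ) : 𝕜) + ((t : ℝ) : 𝕜) * (f₀ y * g' x₀)‖ := hatt.symm
      _ ≤ ‖((1 - t : ℝ) : 𝕜)‖ + ‖((t : ℝ) : 𝕜) * (f₀ y * g' x₀)‖ := norm_add_le _ _
      _ ≤ (1 - t) + t * ‖f₀ y‖ := by
          rw [RCLike.norm_ofReal, abs_of_nonneg (by linarith : (0:ℝ) ≤ 1 - t),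
            norm_mul, norm_mul, RCLike.norm_ofReal, abs_of_nonneg ht0.le]
          have : ‖f₀ y‖ * ‖g' x₀‖ ≤ ‖f₀ y‖ := by
            calc ‖f₀ y‖ * ‖g' x₀‖ ≤ ‖f₀ y‖ * 1 :=
                  mul_le_mul_of_nonneg_left hg'x₀ (norm_nonneg _)
              _ = ‖f₀ y‖ := mul_one _
          nlinarith
  -- but y is close to z, so ‖f₀ y‖ < 1/2
  have hsmall : ‖f₀ y‖ < 1 / 2 := by
    have : f₀ y = f₀ (y - z) := by rw [map_sub, hzker, sub_zero]
    rw [this]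
    calc ‖f₀ (y - z)‖ ≤ ‖f₀‖ * ‖y - z‖ := f₀.le_opNorm _
      _ = ‖y - z‖ := by rw [hf₀norm, one_mul]
      _ < 1 / 2 := hyz
  nlinarith
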